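/- Consider the nonlinear delay equation ẍ(t) + f(t, x(t), ẋ(t)) + s(t, x(t)) + Σ_{k=1}^m s_k(t, x(t), x(h_k(t))) = 0, which possesses a unique trivial equilibrium, where f(t,v,0) = 0, s(t,0) = 0, s_k(t,v,0) = 0, and for u ≠ 0: 0 < a₀ ≤ f(t,v,u)/u ≤ A, 0 < b₀ ≤ s(t,u)/u ≤ B, |s_k(t,v,u)/u| ≤ C_k, and t − h_k(t) ≤ τ. If b₀ ≥ (a₀/2)(A − a₀/2) and Σ_{k=1}^m C_k < a₀²/2 − B, then zero is a global attractor: every twice differentiable solution x satisfies x(t) → 0 as t → ∞. -/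

import Mathlib

open Filter MeasureTheory
open Set


/-- Dini-derivative slope fact for |y|. -/
lemma abs_slope_freq {y g : ℝ → ℝ} {t : ℝ} (hy : HasDerivAt y (g t) t) :
    ∀ r, (if y t = 0 then |g t| else (y t * g t) / |y t|) < r →
      ∃ᶠ z in nhdsWithin t (Ioi t), slope (fun u => |y u|) t z < r := by
  intro r hr
  have hslope : Tendsto (slope y t) (nhdsWithin t (Ioi t)) (nhds (g t)) :=
    ((hasDerivAt_iff_tendsto_slope.1 hy).mono_left
      (nhdsWithin_mono t (fun z hz => ne_of_gt hz)))
  rcases lt_trichotomy (y t) 0 with hneg | h0 | hpos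
  · -- y t < 0 : eventually y z < 0, slope |y| = - slope y → -g t
    rw [if_neg hneg.ne, abs_of_neg hneg] at hr
    have hf' : (y t * g t) / (-(y t)) = -(g t) := by
      rw [div_neg, mul_comm, mul_div_assoc, div_self hneg.ne, mul_one]
    rw [hf'] at hr
    have hyneg : ∀ᶠ z in nhdsWithin t (Ioi t), y z < 0 :=
      ((hy.continuousAt.tendsto).eventually_lt_const hneg).filter_mono
        nhdsWithin_le_nhds
    have hten : Tendsto (fun z => -(slope y t z)) (nhdsWithin t (Ioi t)) (nhds (-(g t))) :=
      hslope.neg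
    have hev : ∀ᶠ z in nhdsWithin t (Ioi t), slope (fun u => |y u|) t z < r := by
      filter_upwards [hten.eventually_lt_const hr, hyneg] with z hz hz'
      have : slope (fun u => |y u|) t z = -(slope y t z) := by
        rw [slope_def_field, slope_def_field, abs_of_neg hz', abs_of_neg hneg]
        ring
      rwa [this]
    exact hev.frequently
  · rw [if_pos h0] at hr
    have habs : Tendsto (fun z => |slope y t z|) (nhdsWithin t (Ioi t)) (nhds (|g t|)) :=
      hslope.abs
    have hev : ∀ᶠ z in nhdsWithin t (Ioi t), slope (fun u => |y u|) t z < r := by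
      filter_upwards [habs.eventually_lt_const hr, self_mem_nhdsWithin] with z hz hz'
      refine lt_of_le_of_lt ?_ hz
      have hzt : (0:ℝ) < z - t := sub_pos.2 hz'
      rw [slope_def_field, slope_def_field, abs_div, abs_of_pos hzt]
      exact div_le_div_of_nonneg_right (abs_sub_abs_le_abs_sub _ _) hzt.le
    exact hev.frequently
  · rw [if_neg hpos.ne', abs_of_pos hpos] at hr
    have hf' : (y t * g t) / (y t) = g t := by
      rw [mul_comm, mul_div_assoc, div_self hpos.ne', mul_one]
    rw [hf'] at hr
    have hypos : ∀ᶠ z in nhdsWithin t (Ioi t), 0 < y z :=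
      ((hy.continuousAt.tendsto).eventually_const_lt hpos).filter_mono
        nhdsWithin_le_nhds
    have hev : ∀ᶠ z in nhdsWithin t (Ioi t), slope (fun u => |y u|) t z < r := by
      filter_upwards [hslope.eventually_lt_const hr, hypos] with z hz hz'
      have : slope (fun u => |y u|) t z = slope y t z := by
        rw [slope_def_field, slope_def_field, abs_of_pos hz', abs_of_pos hpos]
      rwa [this]
    exact hev.frequently

/-- One-sided exponential comparison for `|y|`. -/
lemma comp_abs {α ε : ℝ} (hα : 0 < α) (hε : 0 ≤ ε) {y g : ℝ → ℝ}
    (hy : ∀ t, HasDerivAt y (g t) t) {t₁ t₂ : ℝ} (h12 : t₁ ≤ t₂)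
    (H : ∀ t ∈ Icc t₁ t₂, y t * g t ≤ -α * (y t) ^ 2 + ε * |y t|) :
    |y t₂| ≤ Real.exp (-α * (t₂ - t₁)) * |y t₁| + ε / α := by
  have key : ∀ δ > (0:ℝ), |y t₂| ≤ Real.exp (-α * (t₂ - t₁)) * (|y t₁| + δ) + (ε + δ) / α := by
    intro δ hδ
    set B : ℝ → ℝ := fun t => Real.exp (-α * (t - t₁)) * (|y t₁| + δ) + (ε + δ) / α with hBdef
    set B' : ℝ → ℝ := fun t => -α * (Real.exp (-α * (t - t₁)) * (|y t₁| + δ)) with hB'def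
    have hBd : ∀ t, HasDerivAt B (B' t) t := by
      intro t
      have h1 : HasDerivAt (fun t : ℝ => -α * (t - t₁)) (-α) t := by
        simpa using ((hasDerivAt_id t).sub_const t₁).const_mul (-α)
      have h2 := (h1.exp.mul_const (|y t₁| + δ)).add_const ((ε + δ) / α)
      refine h2.congr_deriv ?_
      simp only [hB'def]
      ring
    have hBpos : ∀ t, 0 < B t := by
      intro t
      have h1 : 0 < Real.exp (-α * (t - t₁)) * (|y t₁| + δ) :=
        mul_pos (Real.exp_pos _) (by positivity)
      have h2 : 0 < (ε + δ) / α := by positivity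
      simpa [B] using add_pos h1 h2
    set F' : ℝ → ℝ := fun t => if y t = 0 then |g t| else (y t * g t) / |y t| with hF'def
    have main : ∀ ⦃u⦄, u ∈ Icc t₁ t₂ → |y u| ≤ B u := by
      apply image_le_of_liminf_slope_right_lt_deriv_boundary
        (f := fun u => |y u|) (f' := F') (B := B) (B' := B')
      · exact (continuous_abs.comp (continuous_iff_continuousAt.2
          fun t => (hy t).continuousAt)).continuousOn
      · intro u _ r hr
        exact abs_slope_freq (hy u) r hr
      · have : B t₁ = (|y t₁| + δ) + (ε + δ) / α := by simp [B]
        rw [this]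
        have : 0 ≤ (ε + δ) / α := by positivity
        linarith
      · exact hBd
      · intro u hu hcontact
        have hypos : y u ≠ 0 := by
          intro h0
          have := hBpos u
          rw [← hcontact, h0] at this
          simp at this
        have hyabs : 0 < |y u| := abs_pos.2 hypos
        have hF : F' u = (y u * g u) / |y u| := if_neg hypos
        have hle : (y u * g u) / |y u| ≤ -α * |y u| + ε := by
          rw [div_le_iff₀ hyabs]
          have := H u ⟨hu.1, hu.2.le⟩
          calc y u * g u ≤ -α * (y u) ^ 2 + ε * |y u| := this
            _ = (-α * |y u| + ε) * |y u| := by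
                rw [← sq_abs]; ring
        have hB' : B' u = -α * B u + (ε + δ) := by
          simp only [B', B]
          field_simp
          ring
        rw [hF, hB', ← hcontact]
        linarith
    exact main (right_mem_Icc.2 h12)
  refine le_of_forall_pos_le_add fun η hη => ?_
  have hc : 0 < Real.exp (-α * (t₂ - t₁)) + 1 / α + 1 := by positivity
  set δ := η / (Real.exp (-α * (t₂ - t₁)) + 1 / α + 1) with hδdef
  have hδ : 0 < δ := by positivity
  have h1 := key δ hδ
  have h2 : Real.exp (-α * (t₂ - t₁)) * (|y t₁| + δ) + (ε + δ) / α
      ≤ Real.exp (-α * (t₂ - t₁)) * |y t₁| + ε / α + η := by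
    have hexp : 0 < Real.exp (-α * (t₂ - t₁)) := Real.exp_pos _
    have hδη : δ * (Real.exp (-α * (t₂ - t₁)) + 1 / α + 1) = η := by
      rw [hδdef]; exact div_mul_cancel₀ _ hc.ne'
    have hbound : Real.exp (-α * (t₂ - t₁)) * δ + δ / α ≤ η := by
      rw [← hδη]
      have : δ / α = δ * (1 / α) := by ring
      nlinarith
    have : (ε + δ) / α = ε / α + δ / α := by ring
    linarith [this]
  linarith


set_option maxHeartbeats 1600000 in
/-- Zero is a global attractor for the nonlinear delay equation
ẍ + f(t,x,ẋ) + s(t,x) + Σ s_k(t,x(t),x(h_k(t))) = 0 under condition 2) of Lemma 2. -/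
theorem nonlinear_delay_global_attractor_case2
    (m : ℕ) (t₀ a₀ A b₀ B τ : ℝ)
    (f : ℝ → ℝ → ℝ → ℝ) (s : ℝ → ℝ → ℝ) (sk : Fin m → ℝ → ℝ → ℝ → ℝ)
    (C : Fin m → ℝ) (h : Fin m → ℝ → ℝ)
    (hhmeas : ∀ k, Measurable (h k)) (hhle : ∀ k t, h k t ≤ t)
    (hτ : 0 < τ) (hdelay : ∀ k t, t - h k t ≤ τ)
    (hf0 : ∀ t v, f t v 0 = 0) (hs0 : ∀ t, s t 0 = 0) (hsk0 : ∀ k t v, sk k t v 0 = 0)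
    (ha₀ : 0 < a₀) (hb₀ : 0 < b₀) (haA : a₀ ≤ A) (hbB : b₀ ≤ B) (hC : ∀ k, 0 ≤ C k)
    (hf : ∀ t v u, u ≠ 0 → a₀ ≤ f t v u / u ∧ f t v u / u ≤ A)
    (hs : ∀ t u, u ≠ 0 → b₀ ≤ s t u / u ∧ s t u / u ≤ B)
    (hsk : ∀ k t v u, u ≠ 0 → |sk k t v u / u| ≤ C k)
    (hcond1 : b₀ ≥ (a₀ / 2) * (A - a₀ / 2)) (hcond2 : (∑ k, C k) < a₀ ^ 2 / 2 - B)
    (x x' x'' : ℝ → ℝ)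
    (hx' : ∀ t, HasDerivAt x (x' t) t) (hx'' : ∀ t, HasDerivAt x' (x'' t) t)
    (hinit : ∃ M : ℝ, ∀ t ≤ t₀, |x t| ≤ M ∧ |x' t| ≤ M)
    (heq : ∀ t ≥ t₀, x'' t + f t (x t) (x' t) + s t (x t)
        + (∑ k, sk k t (x t) (x (h k t))) = 0) :
    Tendsto x atTop (nhds 0) := by
  set α : ℝ := a₀ / 2 with hαdef
  have hαpos : 0 < α := by positivity
  set ρ₀ : ℝ := B - a₀ ^ 2 / 4 with hρ₀def
  set ρ : ℝ := ρ₀ + ∑ k, C k with hρdef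
  have hsC : 0 ≤ ∑ k, C k := Finset.sum_nonneg fun k _ => hC k
  have hαa : a₀ = 2 * α := by rw [hαdef]; ring
  have hAα : α ≤ A - α := by linarith
  have hα2 : a₀ ^ 2 / 4 = α ^ 2 := by rw [hαa]; ring
  have hρ₀nn : 0 ≤ ρ₀ := by
    rw [hρ₀def, hα2]
    nlinarith [mul_le_mul_of_nonneg_left hAα hαpos.le]
  have hρnn : 0 ≤ ρ := by positivity
  have hρα : ρ < α ^ 2 := by
    rw [hρdef, hρ₀def, ← hα2]
    nlinarith
  set μ : ℝ := (ρ / α + α) / 2 with hμdef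
  have hμpos : 0 < μ := by positivity
  have hμα : μ < α := by
    have h1 : ρ / α < α := (div_lt_iff₀ hαpos).2 (by nlinarith)
    simp only [hμdef]; linarith
  have hρμα : ρ < μ * α := by
    have : μ * α = (ρ + α ^ 2) / 2 := by rw [hμdef]; field_simp <;> ring
    rw [this]; linarith
  set q : ℝ := max (μ / α) (ρ / (μ * α)) with hqdef
  have hq0 : 0 ≤ q := le_trans (by positivity) (le_max_left _ _)
  have hq1 : q < 1 := by
    apply max_lt ((div_lt_one hαpos).2 hμα) ((div_lt_one (by positivity)).2 hρμα)
  have hμq : μ / α ≤ q := le_max_left _ _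
  have hρμq : ρ / μ ≤ q * α := by
    have h1 : ρ / (μ * α) ≤ q := le_max_right _ _
    rw [div_le_iff₀ hμpos]
    calc ρ = ρ / (μ * α) * (μ * α) := by field_simp
      _ ≤ q * (μ * α) := by
          apply mul_le_mul_of_nonneg_right h1 (by positivity)
      _ = q * α * μ := by ring
  set y : ℝ → ℝ := fun t => x' t + α * x t with hydef
  set g : ℝ → ℝ := fun t => x'' t + α * x' t with hgdef
  have hyd : ∀ t, HasDerivAt y (g t) t := fun t => (hx'' t).add ((hx' t).const_mul α)
  set Mf : ℝ → ℝ := fun t => max (μ * |x t|) (|y t|) with hMdef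
  have hxM : ∀ t, μ * |x t| ≤ Mf t := fun t => le_max_left _ _
  have hyM : ∀ t, |y t| ≤ Mf t := fun t => le_max_right _ _
  have hMnn : ∀ t, 0 ≤ Mf t := fun t => le_trans (by positivity) (hxM t)
  have hxcont : Continuous x := continuous_iff_continuousAt.2 fun t => (hx' t).continuousAt
  have hycont : Continuous y := continuous_iff_continuousAt.2 fun t => (hyd t).continuousAt
  have hMcont : Continuous Mf :=
    ((continuous_const.mul hxcont.abs).max hycont.abs)
  clear_value Mf
  clear_value g
  clear_value y
  clear_value q
  clear_value μ
  clear_value ρ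
  clear_value ρ₀
  clear_value α
  -- key pointwise inequality
  have keyineq : ∀ t, t₀ ≤ t → ∀ P, 0 ≤ P → (∀ k, μ * |x (h k t)| ≤ P) →
      μ * |x t| ≤ P → y t * g t ≤ -α * (y t) ^ 2 + (q * α * P) * |y t| := by
    intro t ht P hP hxk hxt
    obtain ⟨a, ha1, ha2, hfa⟩ : ∃ a, a₀ ≤ a ∧ a ≤ A ∧ f t (x t) (x' t) = a * x' t := by
      rcases eq_or_ne (x' t) 0 with hu | hu
      · exact ⟨a₀, le_refl _, haA, by rw [hu, hf0, mul_zero]⟩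
      · obtain ⟨h1, h2⟩ := hf t (x t) (x' t) hu
        exact ⟨f t (x t) (x' t) / x' t, h1, h2, (div_mul_cancel₀ _ hu).symm⟩
    obtain ⟨b, hb1, hb2, hsb⟩ : ∃ b, b₀ ≤ b ∧ b ≤ B ∧ s t (x t) = b * x t := by
      rcases eq_or_ne (x t) 0 with hu | hu
      · exact ⟨b₀, le_refl _, hbB, by rw [hu, hs0, mul_zero]⟩
      · obtain ⟨h1, h2⟩ := hs t (x t) hu
        exact ⟨s t (x t) / x t, h1, h2, (div_mul_cancel₀ _ hu).symm⟩
    set S : ℝ := ∑ k, sk k t (x t) (x (h k t)) with hSdef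
    clear_value S
    have hxbd : |x t| ≤ P / μ := (le_div_iff₀ hμpos).2 (by rw [mul_comm]; exact hxt)
    have hSbd : |S| ≤ (∑ k, C k) * (P / μ) := by
      rw [hSdef, Finset.sum_mul]
      refine le_trans (Finset.abs_sum_le_sum_abs _ _) (Finset.sum_le_sum fun k _ => ?_)
      have hw : |x (h k t)| ≤ P / μ := (le_div_iff₀ hμpos).2 (by rw [mul_comm]; exact hxk k)
      rcases eq_or_ne (x (h k t)) 0 with h0 | h0
      · rw [h0, hsk0]; simp only [abs_zero]; exact mul_nonneg (hC k) (by positivity)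
      · have h1 : |sk k t (x t) (x (h k t))| = |sk k t (x t) (x (h k t)) / x (h k t)| * |x (h k t)| := by
          rw [← abs_mul, div_mul_cancel₀ _ h0]
        rw [h1]
        exact mul_le_mul (hsk k t (x t) _ h0) hw (abs_nonneg _) (hC k)
    have hxy : x' t = y t - α * x t := by simp [hydef]
    have hx2 : x'' t = -(a * x' t) - b * x t - S := by
      have := heq t ht
      rw [hfa, hsb] at this
      simp only [hSdef]
      linarith
    set gc : ℝ := (a - α) * α - b with hgcdef
    clear_value gc
    have hg : g t = -(a - α) * y t + gc * x t - S := by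
      simp only [hgdef]
      rw [hx2, hxy]
      simp only [hgcdef]
      ring
    have haα : α ≤ a - α := by linarith
    have hmul1 : (a - α) * α ≤ (A - α) * α :=
      mul_le_mul_of_nonneg_right (by linarith) hαpos.le
    have hmul2 : α * α ≤ (a - α) * α := mul_le_mul_of_nonneg_right haα hαpos.le
    have hcomm : (A - α) * α = α * (A - α) := mul_comm _ _
    have hρ₀eq : ρ₀ = B - α * α := by rw [hρ₀def, hα2]; ring
    have hgc1 : gc ≤ 0 := by rw [hgcdef]; linarith
    have hgc2 : -gc ≤ ρ₀ := by rw [hgcdef]; linarith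
    have hgcabs : |gc| ≤ ρ₀ := abs_le.2 ⟨by linarith, by linarith⟩
    have e1 : y t * g t = -(a - α) * (y t) ^ 2 + gc * x t * y t - S * y t := by
      rw [hg]; ring
    have b1 : -(a - α) * (y t) ^ 2 ≤ -α * (y t) ^ 2 :=
      mul_le_mul_of_nonneg_right (by linarith) (sq_nonneg _)
    have b2 : gc * x t * y t ≤ ρ₀ * (P / μ) * |y t| := by
      calc gc * x t * y t ≤ |gc * x t * y t| := le_abs_self _
        _ = |gc| * |x t| * |y t| := by rw [abs_mul, abs_mul]
        _ ≤ ρ₀ * (P / μ) * |y t| := by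
            apply mul_le_mul_of_nonneg_right _ (abs_nonneg _)
            exact mul_le_mul hgcabs hxbd (abs_nonneg _) hρ₀nn
    have b3 : -(S * y t) ≤ (∑ k, C k) * (P / μ) * |y t| := by
      calc -(S * y t) ≤ |S * y t| := neg_le_abs _
        _ = |S| * |y t| := abs_mul _ _
        _ ≤ (∑ k, C k) * (P / μ) * |y t| :=
            mul_le_mul_of_nonneg_right hSbd (abs_nonneg _)
    have hsum2 : ρ₀ * (P / μ) * |y t| + (∑ k, C k) * (P / μ) * |y t|
        = ρ / μ * P * |y t| := by rw [hρdef]; ring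
    have hfin : ρ / μ * P * |y t| ≤ q * α * P * |y t| :=
      mul_le_mul_of_nonneg_right (mul_le_mul_of_nonneg_right hρμq hP) (abs_nonneg _)
    linarith
  -- comparison for y
  have compY : ∀ t₁ t₂ P, t₀ ≤ t₁ → t₁ ≤ t₂ → 0 ≤ P →
      (∀ u, t₁ - τ ≤ u → u ≤ t₂ → Mf u ≤ P) →
      |y t₂| ≤ Real.exp (-α * (t₂ - t₁)) * |y t₁| + q * P := by
    intro t₁ t₂ P h01 h12 hP hwin
    have H : ∀ t ∈ Icc t₁ t₂, y t * g t ≤ -α * (y t) ^ 2 + (q * α * P) * |y t| := by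
      intro t htm
      refine keyineq t (le_trans h01 htm.1) P hP (fun k => ?_) ?_
      · refine le_trans (hxM _) (hwin _ ?_ ?_)
        · have := hdelay k t; linarith [htm.1]
        · exact le_trans (hhle k t) htm.2
      · exact le_trans (hxM _) (hwin _ (by linarith [htm.1]) htm.2)
    have hc := comp_abs hαpos (by positivity : (0:ℝ) ≤ q * α * P) hyd h12 H
    have : q * α * P / α = q * P := by field_simp
    rwa [this] at hc
  -- comparison for x
  have compX : ∀ t₁ t₂ Q, t₁ ≤ t₂ → 0 ≤ Q → (∀ u, t₁ ≤ u → u ≤ t₂ → |y u| ≤ Q) →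
      μ * |x t₂| ≤ Real.exp (-α * (t₂ - t₁)) * (μ * |x t₁|) + q * Q := by
    intro t₁ t₂ Q h12 hQ hybd
    have H : ∀ t ∈ Icc t₁ t₂, x t * x' t ≤ -α * (x t) ^ 2 + Q * |x t| := by
      intro t htm
      have hxy : x' t = y t - α * x t := by simp [hydef]
      have h1 : x t * y t ≤ |x t| * |y t| := by
        calc x t * y t ≤ |x t * y t| := le_abs_self _
          _ = |x t| * |y t| := abs_mul _ _
      have h2 : |x t| * |y t| ≤ |x t| * Q :=
        mul_le_mul_of_nonneg_left (hybd t htm.1 htm.2) (abs_nonneg _)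
      have h3 : x t * x' t = -α * (x t) ^ 2 + x t * y t := by rw [hxy]; ring
      rw [h3]
      have : |x t| * Q = Q * |x t| := mul_comm _ _
      linarith
    have hc := comp_abs hαpos hQ hx' h12 H
    calc μ * |x t₂| ≤ μ * (Real.exp (-α * (t₂ - t₁)) * |x t₁| + Q / α) :=
          mul_le_mul_of_nonneg_left hc hμpos.le
      _ = Real.exp (-α * (t₂ - t₁)) * (μ * |x t₁|) + (μ / α) * Q := by ring
      _ ≤ Real.exp (-α * (t₂ - t₁)) * (μ * |x t₁|) + q * Q := by
          have := mul_le_mul_of_nonneg_right hμq hQ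
          linarith
  -- initial bound
  obtain ⟨M₀, hM₀⟩ := hinit
  set K : ℝ := (μ + 1 + α) * (|M₀| + 1) with hKdef
  have hKpos : 0 < K := by positivity
  clear_value K
  have hinitM : ∀ u ≤ t₀, Mf u ≤ K := by
    intro u hu
    obtain ⟨h1, h2⟩ := hM₀ u hu
    rw [hMdef]
    simp only
    have hM₀abs : M₀ ≤ |M₀| + 1 := by
      have := le_abs_self M₀; linarith
    have hx1 : |x u| ≤ |M₀| + 1 := by linarith
    have hy1 : |y u| ≤ (1 + α) * (|M₀| + 1) := by
      have : |y u| ≤ |x' u| + α * |x u| := by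
        calc |y u| = |x' u + α * x u| := by rw [hydef]
          _ ≤ |x' u| + |α * x u| := abs_add_le _ _
          _ = |x' u| + α * |x u| := by rw [abs_mul, abs_of_pos hαpos]
      have h4 : α * |x u| ≤ α * (|M₀| + 1) :=
        mul_le_mul_of_nonneg_left hx1 hαpos.le
      have h5 : (1 + α) * (|M₀| + 1) = (|M₀| + 1) + α * (|M₀| + 1) := by ring
      linarith
    apply max_le
    · have h4 : μ * |x u| ≤ μ * (|M₀| + 1) := mul_le_mul_of_nonneg_left hx1 hμpos.le
      have h5 : 0 ≤ α * (|M₀| + 1) := by positivity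
      have h6 : (0:ℝ) ≤ |M₀| + 1 := by positivity
      rw [hKdef]; linarith
    · have h5 : 0 ≤ μ * (|M₀| + 1) := by positivity
      rw [hKdef]; linarith
  -- global bound
  have h1q : 0 < 1 - q := by linarith
  set G : ℝ := (K + 1) / (1 - q) with hGdef
  have hGpos : 0 < G := by positivity
  clear_value G
  have hKqG : K + q * G = G - 1 := by
    have : G * (1 - q) = K + 1 := by rw [hGdef]; field_simp
    linarith
  have hKG : K ≤ G := by
    have h1 : G * (1 - q) = K + 1 := by rw [hGdef]; field_simp
    nlinarith [mul_nonneg hq0 hGpos.le]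
  have bdd : ∀ t, Mf t ≤ G := by
    by_contra hcon
    push_neg at hcon
    obtain ⟨tbad, htbad⟩ := hcon
    set Sb : Set ℝ := {t | G < Mf t} with hSbdef
    have hSne : Sb.Nonempty := ⟨tbad, htbad⟩
    have hSlb : ∀ t ∈ Sb, t₀ ≤ t := by
      intro t ht
      by_contra hlt
      push_neg at hlt
      exact absurd ht (not_lt.2 ((hinitM t hlt.le).trans hKG))
    have hbddb : BddBelow Sb := ⟨t₀, fun t ht => hSlb t ht⟩
    set T : ℝ := sInf Sb with hTdef
    have hT0 : t₀ ≤ T := le_csInf hSne hSlb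
    have hbelow : ∀ u, u < T → Mf u ≤ G := by
      intro u hu
      by_contra hGu
      push_neg at hGu
      exact absurd hu (not_lt.2 (csInf_le hbddb hGu))
    have hTle : Mf T ≤ G := by
      have h1 : Tendsto Mf (nhdsWithin T (Iio T)) (nhds (Mf T)) :=
        (hMcont.tendsto T).mono_left nhdsWithin_le_nhds
      refine le_of_tendsto h1 ?_
      filter_upwards [self_mem_nhdsWithin] with u hu using hbelow u hu
    have hTge : G ≤ Mf T := by
      by_contra hlt
      push_neg at hlt
      have hev : ∀ᶠ u in nhds T, Mf u < G := (hMcont.tendsto T).eventually_lt_const hlt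
      rw [Metric.eventually_nhds_iff] at hev
      obtain ⟨η, hη, hball⟩ := hev
      have hstep : T + η / 2 ≤ T := by
        refine le_csInf hSne fun t ht => ?_
        by_contra hc
        push_neg at hc
        have h2 : T ≤ t := csInf_le hbddb ht
        have : dist t T < η := by
          rw [Real.dist_eq, abs_of_nonneg (by linarith)]; linarith
        exact absurd ht (not_lt.2 (hball this).le)
      linarith
    have hwin : ∀ u, t₀ - τ ≤ u → u ≤ T → Mf u ≤ G := by
      intro u _ huT
      rcases huT.lt_or_eq with hc | hc
      · exact hbelow u hc
      · rw [hc]; exact hTle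
    have hexp1 : Real.exp (-α * (T - t₀)) ≤ 1 :=
      Real.exp_le_one_iff.2 (by nlinarith)
    have hy0 : |y t₀| ≤ K := (hyM t₀).trans (hinitM t₀ le_rfl)
    have hx0 : μ * |x t₀| ≤ K := (hxM t₀).trans (hinitM t₀ le_rfl)
    have hYT : |y T| ≤ K + q * G := by
      have h1 := compY t₀ T G le_rfl hT0 hGpos.le hwin
      have h2 : Real.exp (-α * (T - t₀)) * |y t₀| ≤ K :=
        le_trans (mul_le_mul hexp1 hy0 (abs_nonneg _) zero_le_one) (by linarith)
      linarith
    have hXT : μ * |x T| ≤ K + q * G := by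
      have h1 := compX t₀ T G hT0 hGpos.le
        (fun u hu1 hu2 => (hyM u).trans (hwin u (by linarith) hu2))
      have h2 : Real.exp (-α * (T - t₀)) * (μ * |x t₀|) ≤ K := by
        have hnn : 0 ≤ μ * |x t₀| := by positivity
        calc Real.exp (-α * (T - t₀)) * (μ * |x t₀|) ≤ 1 * (μ * |x t₀|) :=
              mul_le_mul_of_nonneg_right hexp1 hnn
          _ = μ * |x t₀| := one_mul _
          _ ≤ K := hx0
      linarith
    have : Mf T ≤ G - 1 := by
      rw [← hKqG, hMdef]
      exact max_le hXT hYT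
    linarith
  -- choice of decay time
  have hexpG : ∀ ε : ℝ, 0 < ε → ∃ Δ : ℝ, 0 ≤ Δ ∧ Real.exp (-α * Δ) * G ≤ ε / 2 := by
    intro ε hε
    refine ⟨max 0 (-(Real.log (ε / (2 * G))) / α), le_max_left _ _, ?_⟩
    have hpos : 0 < ε / (2 * G) := by positivity
    have h1 : -(Real.log (ε / (2 * G))) / α ≤ max 0 (-(Real.log (ε / (2 * G))) / α) :=
      le_max_right _ _
    have h2 : -(Real.log (ε / (2 * G))) ≤ α * max 0 (-(Real.log (ε / (2 * G))) / α) := by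
      rw [← div_le_iff₀' hαpos]
      exact h1
    have h3 : -α * max 0 (-(Real.log (ε / (2 * G))) / α) ≤ Real.log (ε / (2 * G)) := by
      linarith
    have h4 : Real.exp (-α * max 0 (-(Real.log (ε / (2 * G))) / α)) ≤ ε / (2 * G) := by
      calc Real.exp (-α * max 0 (-(Real.log (ε / (2 * G))) / α))
          ≤ Real.exp (Real.log (ε / (2 * G))) := Real.exp_le_exp.2 h3
        _ = ε / (2 * G) := Real.exp_log hpos
    calc Real.exp (-α * max 0 (-(Real.log (ε / (2 * G))) / α)) * G
        ≤ (ε / (2 * G)) * G := mul_le_mul_of_nonneg_right h4 hGpos.le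
      _ = ε / 2 := by field_simp
  -- the contraction step
  have step : ∀ P : ℝ, 0 ≤ P → ∀ T : ℝ, (∀ t, T ≤ t → Mf t ≤ P) →
      ∀ ε : ℝ, 0 < ε → ∃ T', ∀ t, T' ≤ t → Mf t ≤ q * P + ε := by
    intro P hP T hT ε hε
    obtain ⟨Δ, hΔ0, hΔ⟩ := hexpG ε hε
    set T₁ : ℝ := max T t₀ + τ with hT₁def
    have hT₁t₀ : t₀ ≤ T₁ := by
      have := le_max_right T t₀; rw [hT₁def]; linarith
    refine ⟨T₁ + Δ + Δ, fun t ht => ?_⟩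
    have hybd : ∀ u, T₁ + Δ ≤ u → u ≤ t → |y u| ≤ ε / 2 + q * P := by
      intro u hu1 hu2
      have hwin : ∀ v, T₁ - τ ≤ v → v ≤ u → Mf v ≤ P := by
        intro v hv1 hv2
        refine hT v ?_
        have := le_max_left T t₀
        rw [hT₁def] at hv1; linarith
      have h1 := compY T₁ u P hT₁t₀ (by linarith) hP hwin
      have hyT₁ : |y T₁| ≤ G := (hyM _).trans (bdd _)
      have hmono : Real.exp (-α * (u - T₁)) ≤ Real.exp (-α * Δ) :=
        Real.exp_le_exp.2 (by nlinarith)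
      have h2 : Real.exp (-α * (u - T₁)) * |y T₁| ≤ Real.exp (-α * Δ) * G :=
        mul_le_mul hmono hyT₁ (abs_nonneg _) (Real.exp_pos _).le
      linarith
    have hyt : |y t| ≤ ε / 2 + q * P := hybd t (by linarith) le_rfl
    have hqP : 0 ≤ q * P := mul_nonneg hq0 hP
    have hxt : μ * |x t| ≤ q * P + ε := by
      have h1 := compX (T₁ + Δ) t (ε / 2 + q * P) (by linarith) (by linarith)
        (fun u hu1 hu2 => hybd u hu1 hu2)
      have hxT₂ : μ * |x (T₁ + Δ)| ≤ G := (hxM _).trans (bdd _)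
      have hmono : Real.exp (-α * (t - (T₁ + Δ))) ≤ Real.exp (-α * Δ) :=
        Real.exp_le_exp.2 (by nlinarith)
      have h2 : Real.exp (-α * (t - (T₁ + Δ))) * (μ * |x (T₁ + Δ)|) ≤ Real.exp (-α * Δ) * G := by
        have hnn : 0 ≤ μ * |x (T₁ + Δ)| := by positivity
        exact mul_le_mul hmono hxT₂ hnn (Real.exp_pos _).le
      have h3 : q * (ε / 2 + q * P) ≤ ε / 2 + q * P := by
        nlinarith
      have h4 : q * (ε / 2 + q * P) ≤ ε / 2 + q * P := h3
      have h5 : q * (q * P) ≤ q * P := by nlinarith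
      have h6 : q * (ε / 2) ≤ ε / 2 := by nlinarith
      linarith
    rw [hMdef]
    exact max_le hxt (by linarith)
  -- iteration
  have iter : ∀ ε : ℝ, 0 < ε → ∀ n : ℕ, ∃ T, ∀ t, T ≤ t → Mf t ≤ q ^ n * G + ε / 2 := by
    intro ε hε
    intro n
    induction n with
    | zero =>
      exact ⟨t₀, fun t _ => by simpa using le_trans (bdd t) (by linarith)⟩
    | succ n ih =>
      obtain ⟨T, hT⟩ := ih
      have hPnn : 0 ≤ q ^ n * G + ε / 2 := by positivity
      obtain ⟨T', hT'⟩ := step (q ^ n * G + ε / 2) hPnn T hT (ε * (1 - q) / 2)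
        (by positivity)
      refine ⟨T', fun t ht => ?_⟩
      have := hT' t ht
      have hexp : q * (q ^ n * G + ε / 2) + ε * (1 - q) / 2
          = q ^ (n + 1) * G + ε / 2 := by ring
      linarith
  -- conclusion
  rw [Metric.tendsto_atTop]
  intro ε hε
  have hμε : 0 < μ * ε := by positivity
  obtain ⟨n, hn⟩ : ∃ n : ℕ, q ^ n * G < μ * ε / 2 := by
    have h1 : Tendsto (fun n : ℕ => q ^ n * G) atTop (nhds (0 * G)) :=
      (tendsto_pow_atTop_nhds_zero_of_lt_one hq0 hq1).mul_const G
    rw [zero_mul] at h1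
    exact (h1.eventually_lt_const (by positivity)).exists
  obtain ⟨T, hT⟩ := iter (μ * ε / 2) (by positivity) n
  refine ⟨T, fun t ht => ?_⟩
  have h1 : Mf t ≤ q ^ n * G + μ * ε / 2 / 2 := hT t ht
  have h2 : μ * |x t| < μ * ε := by
    have := hxM t
    linarith
  have h3 : |x t| < ε := by
    have := (mul_lt_mul_iff_right₀ hμpos).1 h2
    exact this
  rw [Real.dist_eq, sub_zero]
  exact h3
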